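/- In the erasure-extension setup of the context, the conditional mutual information satisfies I[Ṽ;B|U] = (1 − ε) · I[V;B|U], where both sides are computed on the classical–quantum state ρ_{UVṼB} and its marginals. -/

import Mathlib

open scoped Kronecker ComplexOrder
open Matrix

noncomputable section

/-- Apply a real function to a Hermitian matrix via the spectral decomposition
(returns `0` on non-Hermitian matrices). -/
noncomputable def matCalc {n : Type*} [Fintype n] [DecidableEq n] (f : ℝ → ℝ)
    (M : Matrix n n ℂ) : Matrix n n ℂ :=
  if h : M.IsHermitian then
    (Matrix.IsHermitian.eigenvectorUnitary h : Matrix n n ℂ) *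
      Matrix.diagonal (fun i => (f (h.eigenvalues i) : ℂ)) *
      star (Matrix.IsHermitian.eigenvectorUnitary h : Matrix n n ℂ)
  else 0

/-- Functional-calculus power of a positive semidefinite matrix, taken on the support
(the eigenvalue `0` is sent to `0`). -/
noncomputable def mpow {n : Type*} [Fintype n] [DecidableEq n]
    (M : Matrix n n ℂ) (c : ℝ) : Matrix n n ℂ :=
  matCalc (fun x => if x = 0 then 0 else Real.rpow x c) M

/-- The von Neumann entropy `−Tr[ρ log₂ ρ]` (with the convention `0·log₂0 = 0`). -/
noncomputable def vnEntropy {n : Type*} [Fintype n] [DecidableEq n]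
    (ρ : Matrix n n ℂ) : ℝ :=
  (Matrix.trace (matCalc (fun x => -(x * Real.logb 2 x)) ρ)).re

/-- A density matrix: positive semidefinite with unit trace. -/
def IsDensityMatrix {n : Type*} [Fintype n] (ρ : Matrix n n ℂ) : Prop :=
  ρ.PosSemidef ∧ ρ.trace = 1

/-- A quantum channel: a map admitting a Kraus representation. -/
def IsQChannel {m n : Type*} [Fintype m] [DecidableEq m] [Fintype n]
    (Φ : Matrix m m ℂ → Matrix n n ℂ) : Prop :=
  ∃ (k : ℕ) (K : Fin k → Matrix n m ℂ),
    (∑ i, (K i)ᴴ * K i = 1) ∧ ∀ X, Φ X = ∑ i, K i * X * (K i)ᴴ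

/-- Tensor extension `Φ ⊗ Ψ` of two (linear) maps on matrices. -/
noncomputable def mapTensor {m m' n n' : Type*} [Fintype m] [DecidableEq m]
    [Fintype m'] [Fintype n] [Fintype n']
    (Φ : Matrix m m ℂ → Matrix n n ℂ) (Ψ : Matrix m' m' ℂ → Matrix n' n' ℂ)
    (X : Matrix (m × m') (m × m') ℂ) : Matrix (n × n') (n × n') ℂ :=
  Matrix.of fun p q =>
    ∑ e : m, ∑ g : m,
      Φ (Matrix.single e g 1) p.1 q.1 *
        Ψ (Matrix.of fun f h => X (e, f) (g, h)) p.2 q.2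

/-- `k`-fold tensor power `Φ^{⊗k}` of a (linear) map on matrices. -/
noncomputable def mapTPow {m n : Type*} [Fintype m] [DecidableEq m] [Fintype n]
    (Φ : Matrix m m ℂ → Matrix n n ℂ) (k : ℕ)
    (X : Matrix (Fin k → m) (Fin k → m) ℂ) : Matrix (Fin k → n) (Fin k → n) ℂ :=
  Matrix.of fun x y =>
    ∑ e : Fin k → m, ∑ g : Fin k → m,
      X e g * ∏ i, Φ (Matrix.single (e i) (g i) 1) (x i) (y i)

/-- `k`-fold Kronecker (tensor) power of a matrix. -/
noncomputable def tpow {d : Type*} (ρ : Matrix d d ℂ) (k : ℕ) :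
    Matrix (Fin k → d) (Fin k → d) ℂ :=
  Matrix.of fun x y => ∏ i, ρ (x i) (y i)

/-- Partial trace over the first tensor factor. -/
noncomputable def traceOutFst {a b : Type*} [Fintype a]
    (M : Matrix (a × b) (a × b) ℂ) : Matrix b b ℂ :=
  Matrix.of fun j j' => ∑ i, M (i, j) (i, j')

/-- Partial trace over the second tensor factor. -/
noncomputable def traceOutSnd {a b : Type*} [Fintype b]
    (M : Matrix (a × b) (a × b) ℂ) : Matrix a a ℂ :=
  Matrix.of fun i i' => ∑ j, M (i, j) (i', j)

/-- Quantum mutual information `I[X;Y] = H(ρ_X) + H(ρ_Y) − H(ρ_{XY})` of a bipartite state. -/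
noncomputable def mutInfo {a b : Type*} [Fintype a] [DecidableEq a] [Fintype b] [DecidableEq b]
    (ρ : Matrix (a × b) (a × b) ℂ) : ℝ :=
  vnEntropy (traceOutSnd ρ) + vnEntropy (traceOutFst ρ) - vnEntropy ρ

/-- Fidelity `F(ρ,σ) = Tr √(√σ ρ √σ)`. -/
noncomputable def fidelity {n : Type*} [Fintype n] [DecidableEq n]
    (ρ σ : Matrix n n ℂ) : ℝ :=
  (Matrix.trace (mpow (mpow σ (1/2) * ρ * mpow σ (1/2)) (1/2))).re

/-- Purified distance `P(ρ,σ) = √(1 − F(ρ,σ)²)`. -/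
noncomputable def purifiedDist {n : Type*} [Fintype n] [DecidableEq n]
    (ρ σ : Matrix n n ℂ) : ℝ :=
  Real.sqrt (1 - fidelity ρ σ ^ 2)

/-- Number of distinct eigenvalues (cardinality of the spectrum). -/
noncomputable def nEig {n : Type*} [Fintype n] [DecidableEq n] (M : Matrix n n ℂ) : ℕ :=
  (spectrum ℂ M).ncard

/-- The set of (distinct) eigenvalues of a Hermitian matrix, as a finset. -/
noncomputable def eigSet {n : Type*} [Fintype n] [DecidableEq n] (σ : Matrix n n ℂ) : Finset ℝ :=
  if h : σ.IsHermitian then Finset.univ.image h.eigenvalues else ∅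

/-- Spectral projection of a Hermitian matrix onto the eigenvalue `t`. -/
noncomputable def eigProj {n : Type*} [Fintype n] [DecidableEq n]
    (σ : Matrix n n ℂ) (t : ℝ) : Matrix n n ℂ :=
  matCalc (fun x => if x = t then 1 else 0) σ

/-- The pinching map `E_σ(X) = ∑_j P_j X P_j` with respect to `σ`. -/
noncomputable def pinch {n : Type*} [Fintype n] [DecidableEq n]
    (σ X : Matrix n n ℂ) : Matrix n n ℂ :=
  ∑ t ∈ eigSet σ, eigProj σ t * X * eigProj σ t

/-- The pinching map `id ⊗ E_σ` acting on the second factor of a bipartite system. -/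
noncomputable def pinchSnd {v n : Type*} [Fintype v] [DecidableEq v] [Fintype n] [DecidableEq n]
    (σ : Matrix n n ℂ) (Y : Matrix (v × n) (v × n) ℂ) : Matrix (v × n) (v × n) ℂ :=
  ∑ t ∈ eigSet σ, ((1 : Matrix v v ℂ) ⊗ₖ eigProj σ t) * Y * ((1 : Matrix v v ℂ) ⊗ₖ eigProj σ t)

/-- The projection `{A ≥ B}` onto the nonnegative eigenspaces of `A − B`. -/
noncomputable def projGE {n : Type*} [Fintype n] [DecidableEq n]
    (A B : Matrix n n ℂ) : Matrix n n ℂ :=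
  matCalc (fun x => if 0 ≤ x then 1 else 0) (A - B)

/-- `Q_{1−α}(ρ‖σ) = Tr[(σ^{α/(2(1−α))} ρ σ^{α/(2(1−α))})^{1−α}]`. -/
noncomputable def Qfun {n : Type*} [Fintype n] [DecidableEq n]
    (a : ℝ) (ρ σ : Matrix n n ℂ) : ℝ :=
  (Matrix.trace (mpow (mpow σ (a/(2*(1-a))) * ρ * mpow σ (a/(2*(1-a)))) (1-a))).re

/-- The sandwiched Rényi relative entropy
`D̲_β(ρ‖σ) = (1/(β−1)) log₂ Tr[(σ^{−(β−1)/(2β)} ρ σ^{−(β−1)/(2β)})^β]`. -/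
noncomputable def sRenyi {n : Type*} [Fintype n] [DecidableEq n]
    (b : ℝ) (ρ σ : Matrix n n ℂ) : ℝ :=
  (1/(b-1)) *
    Real.logb 2 ((Matrix.trace (mpow (mpow σ (-(b-1)/(2*b)) * ρ * mpow σ (-(b-1)/(2*b))) b)).re)

/-- The rank-one projector `|u⟩⟨u|`. -/
noncomputable def ketbra {n : Type*} [DecidableEq n] (u : n) : Matrix n n ℂ :=
  Matrix.single u u 1

/-- The classical–quantum state `∑_{u,v} p(u,v) |u⟩⟨u| ⊗ |v⟩⟨v| ⊗ ρ_{B|u,v}`. -/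
noncomputable def cqState {U V B : Type*} [Fintype U] [DecidableEq U]
    [Fintype V] [DecidableEq V] [Fintype B]
    (p : U × V → ℝ) (ρ : U → V → Matrix B B ℂ) :
    Matrix ((U × V) × B) ((U × V) × B) ℂ :=
  ∑ u, ∑ v, (p (u, v) : ℂ) • ((ketbra u ⊗ₖ ketbra v) ⊗ₖ ρ u v)

/-- A generic classical–quantum joint state with labels `lab i` and states `ρ i`. -/
noncomputable def cqJoint {ι X B : Type*} [Fintype ι] [Fintype X] [Fintype B]
    (p : ι → ℝ) (lab : ι → Matrix X X ℂ) (ρ : ι → Matrix B B ℂ) :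
    Matrix (X × B) (X × B) ℂ :=
  ∑ i, (p i : ℂ) • (lab i ⊗ₖ ρ i)

/-- Rényi conditional mutual information `I̲_β[V;B|U]`, given as the infimum over families of
positive definite density matrices `σ_{B|u}`. -/
noncomputable def renyiCondMI {U V B : Type*} [Fintype U] [DecidableEq U]
    [Fintype V] [DecidableEq V] [Fintype B] [DecidableEq B]
    (b : ℝ) (p : U × V → ℝ) (ρ : U → V → Matrix B B ℂ) : ℝ :=
  sInf { r | ∃ σ : U → Matrix B B ℂ,
    (∀ u, (σ u).PosDef ∧ (σ u).trace = 1) ∧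
    r = sRenyi b (cqState p ρ) (cqState p (fun u _ => σ u)) }

/-- The state of the erasure register: `(1−ε)|v⟩⟨v| + ε|e⟩⟨e|` (the erasure symbol is `none`). -/
noncomputable def erasureKet {V : Type*} [Fintype V] [DecidableEq V] (ε : ℝ) (v : V) :
    Matrix (Option V) (Option V) ℂ :=
  ((1 - ε : ℝ) : ℂ) • ketbra (Option.some v) + (ε : ℂ) • ketbra (Option.none)

open Polynomial

lemma conj_pow' {n : Type*} [Fintype n] [DecidableEq n] (W A : Matrix n n ℂ)
    (h1 : star W * W = 1) (k : ℕ) :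
    (W * A * star W) ^ k = W * A ^ k * star W := by
  have h2 : W * star W = 1 := mul_eq_one_comm.mp h1
  induction k with
  | zero => simpa using h2.symm
  | succ m ih =>
      rw [pow_succ, ih, pow_succ]
      calc W * A ^ m * star W * (W * A * star W)
          = W * A ^ m * (star W * W) * (A * star W) := by
            simp only [Matrix.mul_assoc]
        _ = W * (A ^ m * A) * star W := by rw [h1]; simp only [Matrix.mul_one, Matrix.mul_assoc]

lemma aeval_conj {n : Type*} [Fintype n] [DecidableEq n] (W A : Matrix n n ℂ)
    (h1 : star W * W = 1) (q : ℂ[X]) :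
    aeval (W * A * star W) q = W * aeval A q * star W := by
  induction q using Polynomial.induction_on' with
  | add p q hp hq => rw [map_add, hp, hq, map_add, Matrix.mul_add, Matrix.add_mul]
  | monomial k a =>
      rw [aeval_monomial, aeval_monomial, conj_pow' _ _ h1]
      simp only [Algebra.algebraMap_eq_smul_one]
      rw [smul_mul_assoc, one_mul, smul_mul_assoc, one_mul, mul_smul_comm, smul_mul_assoc]

lemma aeval_diag {n : Type*} [Fintype n] [DecidableEq n] (c : n → ℂ) (q : ℂ[X]) :
    aeval (diagonal c) q = diagonal (fun i => q.eval (c i)) := by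
  induction q using Polynomial.induction_on' with
  | add p q hp hq =>
      rw [map_add, hp, hq, diagonal_add]
      congr 1; funext i; simp
  | monomial k a =>
      rw [aeval_monomial, diagonal_pow]
      simp only [Algebra.algebraMap_eq_smul_one]
      rw [smul_mul_assoc, one_mul]
      ext i j
      by_cases h : i = j <;> simp [h, eval_monomial, diagonal]

lemma trace_conj_diag {n : Type*} [Fintype n] [DecidableEq n]
    (V : Matrix n n ℂ) (c : n → ℂ) (hV : star V * V = 1) :
    (V * diagonal c * star V).trace = ∑ i, c i := by
  rw [trace_mul_cycle, hV, Matrix.one_mul, trace_diagonal]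

lemma trace_matCalc {n : Type*} [Fintype n] [DecidableEq n]
    (f : ℝ → ℝ) (U : Matrix n n ℂ) (d : n → ℝ) (h1 : star U * U = 1) :
    (matCalc f (U * diagonal (fun i => (d i : ℂ)) * star U)).trace
      = ↑(∑ i, f (d i)) := by
  set M : Matrix n n ℂ := U * diagonal (fun i => (d i : ℂ)) * star U with hMdef
  have hM : M.IsHermitian := by
    unfold Matrix.IsHermitian
    rw [hMdef, conjTranspose_mul, conjTranspose_mul, diagonal_conjTranspose]
    simp [Matrix.star_eq_conjTranspose, Matrix.mul_assoc, Pi.star_def]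
  set V : Matrix n n ℂ := (Matrix.IsHermitian.eigenvectorUnitary hM : Matrix n n ℂ) with hVdef
  have hVu : star V * V = 1 := by
    exact Matrix.mem_unitaryGroup_iff'.mp (Matrix.IsHermitian.eigenvectorUnitary hM).2
  set μ : n → ℝ := hM.eigenvalues with hμdef
  have hspec : M = V * diagonal (fun i => ((μ i : ℝ) : ℂ)) * star V := by
    exact hM.spectral_theorem
  -- interpolation polynomial
  set s : Finset ℝ := (Finset.univ.image μ) ∪ (Finset.univ.image d) with hsdef
  set P : Polynomial ℝ := Lagrange.interpolate s id f with hPdef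
  have hP : ∀ x ∈ s, P.eval x = f x := by
    intro x hx
    exact Lagrange.eval_interpolate_at_node (v := id) (r := f) (Set.injOn_id _) hx
  set q : Polynomial ℂ := P.map (algebraMap ℝ ℂ) with hqdef
  have hq : ∀ x ∈ s, q.eval ((x : ℝ) : ℂ) = ((f x : ℝ) : ℂ) := by
    intro x hx
    rw [hqdef, Polynomial.eval_map,
      show ((x : ℝ) : ℂ) = algebraMap ℝ ℂ x from rfl, Polynomial.eval₂_at_apply, hP x hx]
    exact rfl
  have hμs : ∀ i, μ i ∈ s := fun i =>
    Finset.mem_union_left _ (Finset.mem_image_of_mem _ (Finset.mem_univ i))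
  have hds : ∀ i, d i ∈ s := fun i =>
    Finset.mem_union_right _ (Finset.mem_image_of_mem _ (Finset.mem_univ i))
  have key : (Polynomial.aeval M q).trace = (Polynomial.aeval M q).trace := rfl
  have t1 : (Polynomial.aeval M q).trace = ∑ i, ((f (μ i) : ℝ) : ℂ) := by
    rw [hspec, aeval_conj _ _ hVu, aeval_diag, trace_conj_diag _ _ hVu]
    exact Finset.sum_congr rfl fun i _ => hq (μ i) (hμs i)
  have t2 : (Polynomial.aeval M q).trace = ∑ i, ((f (d i) : ℝ) : ℂ) := by
    rw [hMdef, aeval_conj _ _ h1, aeval_diag, trace_conj_diag _ _ h1]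
    exact Finset.sum_congr rfl fun i _ => hq (d i) (hds i)
  have t3 : (matCalc f M).trace = ∑ i, ((f (μ i) : ℝ) : ℂ) := by
    rw [matCalc, dif_pos hM, trace_conj_diag _ _ hVu]
  rw [t3, ← t1, t2, Complex.ofReal_sum]

/-- entropy function -/
noncomputable def phiH (x : ℝ) : ℝ := -(x * Real.logb 2 x)

lemma phiH_mul (x y : ℝ) : phiH (x * y) = y * phiH x + x * phiH y := by
  have h := Real.negMulLog_mul x y
  have hx : ∀ z : ℝ, phiH z = Real.negMulLog z / Real.log 2 := by
    intro z
    simp [phiH, Real.negMulLog, Real.logb, div_eq_mul_inv]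
    ring
  rw [hx, hx, hx, h]
  ring

lemma phiH_zero : phiH 0 = 0 := by simp [phiH]

lemma vnEntropy_ud {n : Type*} [Fintype n] [DecidableEq n]
    (U : Matrix n n ℂ) (d : n → ℝ) (h1 : star U * U = 1) :
    vnEntropy (U * diagonal (fun i => ((d i : ℝ) : ℂ)) * star U) = ∑ i, phiH (d i) := by
  rw [vnEntropy, trace_matCalc _ _ _ h1, Complex.ofReal_re]
  rfl

lemma trace_ud {n : Type*} [Fintype n] [DecidableEq n]
    (U : Matrix n n ℂ) (d : n → ℝ) (h1 : star U * U = 1) :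
    (U * diagonal (fun i => ((d i : ℝ) : ℂ)) * star U).trace = ((∑ i, d i : ℝ) : ℂ) := by
  rw [trace_conj_diag _ _ h1]
  push_cast
  rfl

lemma vnEntropy_diagonal {n : Type*} [Fintype n] [DecidableEq n] (r : n → ℝ) :
    vnEntropy (diagonal (fun i => ((r i : ℝ) : ℂ))) = ∑ i, phiH (r i) := by
  have := vnEntropy_ud (1 : Matrix n n ℂ) r (by simp)
  simpa using this

/-- decomposition of a PSD matrix -/
lemma psd_decomp {n : Type*} [Fintype n] [DecidableEq n] {M : Matrix n n ℂ}
    (h : M.PosSemidef) :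
    ∃ (U : Matrix n n ℂ) (d : n → ℝ), star U * U = 1 ∧ (∀ i, 0 ≤ d i) ∧
      M = U * diagonal (fun i => ((d i : ℝ) : ℂ)) * star U := by
  refine ⟨(Matrix.IsHermitian.eigenvectorUnitary h.1 : Matrix n n ℂ), h.1.eigenvalues,
    Matrix.mem_unitaryGroup_iff'.mp (Matrix.IsHermitian.eigenvectorUnitary h.1).2,
    h.eigenvalues_nonneg, ?_⟩
  exact h.1.spectral_theorem

lemma vnEntropy_smul {n : Type*} [Fintype n] [DecidableEq n] {M : Matrix n n ℂ}
    (h : M.PosSemidef) (c : ℝ) :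
    vnEntropy (((c : ℝ) : ℂ) • M) = c * vnEntropy M + phiH c * M.trace.re := by
  obtain ⟨U, d, hU, hd, hM⟩ := psd_decomp h
  have hdiag : diagonal (fun i => (((c * d i : ℝ)) : ℂ))
      = ((c : ℝ) : ℂ) • diagonal (fun i => ((d i : ℝ) : ℂ)) := by
    ext i j
    by_cases hij : i = j <;> simp [diagonal_apply, hij, Matrix.smul_apply, Complex.ofReal_mul]
  have hsm : ((c : ℝ) : ℂ) • M = U * diagonal (fun i => (((c * d i : ℝ)) : ℂ)) * star U := by
    rw [hM, hdiag, mul_smul_comm, smul_mul_assoc]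
  rw [hsm, vnEntropy_ud _ _ hU, hM, vnEntropy_ud _ _ hU, trace_ud _ _ hU]
  simp only [Complex.ofReal_re]
  rw [Finset.mul_sum, Finset.mul_sum, ← Finset.sum_add_distrib]
  refine Finset.sum_congr rfl fun i _ => ?_
  rw [phiH_mul]
  ring

/-- block diagonal cq matrix -/
noncomputable def blk {X B : Type*} [DecidableEq X] (σ : X → Matrix B B ℂ) :
    Matrix (X × B) (X × B) ℂ :=
  Matrix.of fun p q => if p.1 = q.1 then σ p.1 p.2 q.2 else 0

lemma blk_apply {X B : Type*} [DecidableEq X] (σ : X → Matrix B B ℂ) (p q : X × B) :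
    blk σ p q = if p.1 = q.1 then σ p.1 p.2 q.2 else 0 := rfl

lemma blk_mul {X B : Type*} [DecidableEq X] [Fintype X] [Fintype B]
    (σ τ : X → Matrix B B ℂ) : blk σ * blk τ = blk (fun x => σ x * τ x) := by
  ext ⟨x, b⟩ ⟨y, c⟩
  simp only [Matrix.mul_apply, blk_apply, Fintype.sum_prod_type]
  by_cases h : x = y
  · subst h
    simp [ite_mul, mul_ite, eq_comm, Finset.sum_ite_eq']
  · simp only [h, if_false]
    refine Finset.sum_eq_zero fun z _ => Finset.sum_eq_zero fun e _ => ?_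
    by_cases hz : x = z
    · subst hz
      simp [h]
    · simp [hz]

lemma blk_star {X B : Type*} [DecidableEq X] (σ : X → Matrix B B ℂ) :
    star (blk σ) = blk (fun x => (σ x)ᴴ) := by
  ext ⟨x, b⟩ ⟨y, c⟩
  simp only [Matrix.star_eq_conjTranspose, conjTranspose_apply, blk_apply]
  by_cases h : x = y
  · subst h; simp
  · simp [h, Ne.symm h]

lemma blk_one {X B : Type*} [DecidableEq X] [DecidableEq B] [Fintype B] :
    blk (fun _ : X => (1 : Matrix B B ℂ)) = 1 := by
  ext ⟨x, b⟩ ⟨y, c⟩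
  simp only [blk_apply, Matrix.one_apply, Prod.mk.injEq, Prod.ext_iff]
  by_cases h : x = y
  · subst h; simp
  · simp [h]

lemma blk_diag {X B : Type*} [DecidableEq X] [DecidableEq B]
    (e : X → B → ℝ) :
    blk (fun x => diagonal (fun b => ((e x b : ℝ) : ℂ)))
      = diagonal (fun p : X × B => ((e p.1 p.2 : ℝ) : ℂ)) := by
  ext ⟨x, b⟩ ⟨y, c⟩
  simp only [blk_apply, diagonal_apply, Prod.mk.injEq]
  by_cases h : x = y
  · subst h
    by_cases hbc : b = c <;> simp [hbc]
  · simp [h]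

lemma vnEntropy_blk {X B : Type*} [Fintype X] [DecidableEq X] [Fintype B] [DecidableEq B]
    (σ : X → Matrix B B ℂ) (hσ : ∀ x, (σ x).PosSemidef) :
    vnEntropy (blk σ) = ∑ x, vnEntropy (σ x) := by
  have hdec := fun x => psd_decomp (hσ x)
  choose U d hU hd hM using hdec
  have hW : star (blk U) * blk U = 1 := by
    rw [blk_star, blk_mul, show (fun x => (U x)ᴴ * U x) = fun _ => (1 : Matrix B B ℂ) from
      funext fun x => by rw [← Matrix.star_eq_conjTranspose]; exact hU x, blk_one]
  have hblk : blk σ = blk U * diagonal (fun p : X × B => ((d p.1 p.2 : ℝ) : ℂ)) * star (blk U) := by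
    rw [← blk_diag, blk_star, blk_mul, blk_mul]
    exact congrArg blk (funext fun x => by rw [← Matrix.star_eq_conjTranspose]; exact hM x)
  rw [hblk, vnEntropy_ud _ _ hW, Fintype.sum_prod_type]
  refine Finset.sum_congr rfl fun x _ => ?_
  rw [hM x, vnEntropy_ud _ _ (hU x)]

lemma traceOutSnd_blk {X B : Type*} [Fintype X] [DecidableEq X] [Fintype B]
    (σ : X → Matrix B B ℂ) :
    (Matrix.of fun x x' : X => ∑ b : B, blk σ (x, b) (x', b))
      = diagonal (fun x => (σ x).trace) := by
  ext x x'
  simp only [Matrix.of_apply, blk_apply, diagonal_apply]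
  by_cases h : x = x'
  · subst h; simp [Matrix.trace, Matrix.diag]
  · simp [h]

lemma traceOutFst_blk {X B : Type*} [Fintype X] [DecidableEq X] [Fintype B]
    (σ : X → Matrix B B ℂ) :
    (Matrix.of fun b b' : B => ∑ x : X, blk σ (x, b) (x, b')) = ∑ x, σ x := by
  ext b b'
  simp [blk_apply, Matrix.sum_apply]

lemma psd_real_smul {n : Type*} [Fintype n] {M : Matrix n n ℂ} (h : M.PosSemidef)
    {c : ℝ} (hc : 0 ≤ c) : (((c : ℝ) : ℂ) • M).PosSemidef := by
  constructor
  · rw [Matrix.IsHermitian, conjTranspose_smul, h.1.eq]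
    congr 1
    simp [Complex.ext_iff]
  · intro x
    have h0 : (0 : ℂ) ≤ ((c : ℝ) : ℂ) := by
      rw [Complex.le_def]
      simp [hc]
    exact (h.smul h0).2 x


lemma traceOutSnd_blk' {X B : Type*} [Fintype X] [DecidableEq X] [Fintype B]
    (σ : X → Matrix B B ℂ) :
    traceOutSnd (blk σ) = diagonal (fun x => (σ x).trace) :=
  traceOutSnd_blk σ

lemma traceOutFst_blk' {X B : Type*} [Fintype X] [DecidableEq X] [Fintype B]
    (σ : X → Matrix B B ℂ) :
    traceOutFst (blk σ) = ∑ x, σ x :=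
  traceOutFst_blk σ

lemma kron_ketbra {X Y : Type*} [DecidableEq X] [DecidableEq Y] (x : X) (y : Y) :
    (ketbra x ⊗ₖ ketbra y : Matrix (X × Y) (X × Y) ℂ)
      = Matrix.single (x, y) (x, y) (1 : ℂ) := by
  ext ⟨a, b⟩ ⟨c, d⟩
  simp only [kroneckerMap_apply, ketbra, single, Matrix.of_apply, Prod.mk.injEq]
  by_cases h1 : x = a <;> by_cases h2 : x = c <;> by_cases h3 : y = b <;> by_cases h4 : y = d <;>
    by_cases h5 : a = c <;> by_cases h6 : b = d <;>
      simp_all [Prod.ext_iff]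

lemma cq_blk' {X B : Type*} [Fintype X] [DecidableEq X] [Fintype B]
    (τ : X → Matrix B B ℂ) :
    ∑ x, (Matrix.single x x (1 : ℂ)) ⊗ₖ τ x = blk τ := by
  ext ⟨x₁, b⟩ ⟨x₂, b'⟩
  simp only [Matrix.sum_apply, kroneckerMap_apply, single, Matrix.of_apply, blk_apply]
  by_cases h : x₁ = x₂
  · subst h
    rw [Finset.sum_eq_single x₁]
    · simp
    · intro y _ hy
      simp [hy]
    · intro hx
      exact absurd (Finset.mem_univ x₁) hx
  · rw [if_neg h]
    refine Finset.sum_eq_zero fun y _ => ?_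
    by_cases hy : y = x₁
    · subst hy
      simp [h]
    · simp [hy]

lemma kron_sum_right {C B ι : Type*} (K : Matrix C C ℂ) (s : Finset ι)
    (f : ι → Matrix B B ℂ) :
    (K ⊗ₖ (∑ i ∈ s, f i) : Matrix (C × B) (C × B) ℂ) = ∑ i ∈ s, K ⊗ₖ f i := by
  ext ⟨a, b⟩ ⟨c, d⟩
  simp [kroneckerMap_apply, Matrix.sum_apply, Finset.mul_sum]


/-- In the erasure-extension setup, `I[Ṽ;B|U] = (1−ε)·I[V;B|U]`. -/
theorem erasure_cond_mutual_info {dU dV dB : ℕ}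
    (p : Fin dU × Fin dV → ℝ) (hp : ∀ x, 0 ≤ p x) (hp1 : ∑ x, p x = 1)
    (ρB : Fin dU → Fin dV → Matrix (Fin dB) (Fin dB) ℂ)
    (hρB : ∀ u v, IsDensityMatrix (ρB u v))
    (ε : ℝ) (hε : ε ∈ Set.Icc (0 : ℝ) 1) :
    mutInfo (∑ u, ∑ v, (p (u, v) : ℂ) • ((ketbra u ⊗ₖ erasureKet ε v) ⊗ₖ ρB u v)) -
        mutInfo (∑ u, ∑ v, (p (u, v) : ℂ) • (ketbra u ⊗ₖ ρB u v)) =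
      (1 - ε) *
        (mutInfo (∑ u, ∑ v, (p (u, v) : ℂ) • ((ketbra u ⊗ₖ ketbra v) ⊗ₖ ρB u v)) -
          mutInfo (∑ u, ∑ v, (p (u, v) : ℂ) • (ketbra u ⊗ₖ ρB u v))) := by
  obtain ⟨hε0, hε1⟩ := hε
  have hρpsd : ∀ u v, (ρB u v).PosSemidef := fun u v => (hρB u v).1
  have htr : ∀ u v, (ρB u v).trace = 1 := fun u v => (hρB u v).2
  set pU : Fin dU → ℝ := fun u => ∑ v, p (u, v) with hpU
  set σb : Fin dU → Matrix (Fin dB) (Fin dB) ℂ := fun u => ∑ v, (p (u, v) : ℂ) • ρB u v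
    with hσb
  set Huv : Fin dU → Fin dV → ℝ := fun u v => vnEntropy (ρB u v) with hHuv
  set Hu : Fin dU → ℝ := fun u => vnEntropy (σb u) with hHu
  set σ2 : (Fin dU × Fin dV) → Matrix (Fin dB) (Fin dB) ℂ :=
    fun x => ((p x : ℝ) : ℂ) • ρB x.1 x.2 with hσ2
  set σ1 : (Fin dU × Option (Fin dV)) → Matrix (Fin dB) (Fin dB) ℂ :=
    fun x => Option.rec (((ε : ℝ) : ℂ) • σb x.1)
      (fun v => (((1 - ε) * p (x.1, v) : ℝ) : ℂ) • ρB x.1 v) x.2 with hσ1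
  have hσbpsd : ∀ u, (σb u).PosSemidef := by
    intro u
    refine Finset.sum_induction _ _ (fun a b ha hb => ha.add hb) Matrix.PosSemidef.zero ?_
    intro v _
    exact psd_real_smul (hρpsd u v) (hp (u, v))
  have hσbtr : ∀ u, (σb u).trace = ((pU u : ℝ) : ℂ) := by
    intro u
    simp only [hσb, Matrix.trace_sum, Matrix.trace_smul, htr, smul_eq_mul, mul_one, hpU]
    push_cast
    rfl
  -- state identifications
  have E0 : (∑ u, ∑ v, (p (u, v) : ℂ) • (ketbra u ⊗ₖ ρB u v)) = blk σb := by
    rw [← cq_blk' σb]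
    refine Finset.sum_congr rfl fun u _ => ?_
    rw [hσb]
    rw [kron_sum_right]
    refine Finset.sum_congr rfl fun v _ => ?_
    rw [kronecker_smul]
    rfl
  have E2 : (∑ u, ∑ v, (p (u, v) : ℂ) • ((ketbra u ⊗ₖ ketbra v) ⊗ₖ ρB u v)) = blk σ2 := by
    rw [← cq_blk' σ2, Fintype.sum_prod_type]
    refine Finset.sum_congr rfl fun u _ => Finset.sum_congr rfl fun v _ => ?_
    rw [kron_ketbra]
    show _ = _ ⊗ₖ (((p (u, v) : ℝ) : ℂ) • ρB u v)
    rw [kronecker_smul]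
  have E1 : (∑ u, ∑ v, (p (u, v) : ℂ) • ((ketbra u ⊗ₖ erasureKet ε v) ⊗ₖ ρB u v))
      = blk σ1 := by
    rw [← cq_blk' σ1, Fintype.sum_prod_type]
    refine Finset.sum_congr rfl fun u _ => ?_
    rw [show (Finset.univ : Finset (Option (Fin dV))) = Finset.insertNone Finset.univ from
      univ_option _, Finset.sum_insertNone]
    have expand : ∀ v, (p (u, v) : ℂ) • ((ketbra u ⊗ₖ erasureKet ε v) ⊗ₖ ρB u v)
        = (((1 - ε) * p (u, v) : ℝ) : ℂ) •
            ((Matrix.single (u, (Option.some v : Option (Fin dV)))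
              (u, Option.some v) (1 : ℂ)) ⊗ₖ ρB u v)
          + ((ε : ℂ) * (p (u, v) : ℂ)) •
            ((Matrix.single (u, (Option.none : Option (Fin dV)))
              (u, Option.none) (1 : ℂ)) ⊗ₖ ρB u v) := by
      intro v
      rw [erasureKet, kronecker_add, kronecker_smul, kronecker_smul, add_kronecker,
        smul_kronecker, smul_kronecker, kron_ketbra, kron_ketbra, smul_add, smul_smul,
        smul_smul]
      congr 1
      · congr 1
        push_cast
        ring
      · congr 1
        ring
    rw [Finset.sum_congr rfl (fun v _ => expand v), Finset.sum_add_distrib, add_comm]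
    congr 1
    · have h1 : ∀ v : Fin dV, ((ε : ℂ) * (p (u, v) : ℂ)) •
          ((Matrix.single (u, (Option.none : Option (Fin dV)))
            (u, Option.none) (1 : ℂ)) ⊗ₖ ρB u v)
          = (ε : ℂ) • ((Matrix.single (u, (Option.none : Option (Fin dV)))
              (u, (Option.none : Option (Fin dV))) (1 : ℂ)) ⊗ₖ ((p (u, v) : ℂ) • ρB u v)) := by
        intro v
        rw [kronecker_smul, smul_smul]
      rw [Finset.sum_congr rfl (fun v _ => h1 v), ← Finset.smul_sum, ← kron_sum_right,
        ← kronecker_smul]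
    · refine Finset.sum_congr rfl fun v _ => ?_
      show (((1 - ε) * p (u, v) : ℝ) : ℂ) •
            ((Matrix.single (u, (Option.some v : Option (Fin dV)))
              (u, Option.some v) (1 : ℂ)) ⊗ₖ ρB u v)
          = (Matrix.single (u, (Option.some v : Option (Fin dV)))
              (u, Option.some v) (1 : ℂ)) ⊗ₖ ((((1 - ε) * p (u, v) : ℝ) : ℂ) • ρB u v)
      rw [kronecker_smul]
  rw [E0, E1, E2]
  -- marginals
  have hS1 : ∑ x, σ1 x = ∑ u, σb u := by
    rw [Fintype.sum_prod_type]
    refine Finset.sum_congr rfl fun u _ => ?_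
    rw [show (Finset.univ : Finset (Option (Fin dV))) = Finset.insertNone Finset.univ from
      univ_option _, Finset.sum_insertNone]
    have h2 : ∑ v, σ1 (u, Option.some v) = (((1 - ε : ℝ)) : ℂ) • σb u := by
      rw [hσb, Finset.smul_sum]
      refine Finset.sum_congr rfl fun v _ => ?_
      show (((1 - ε) * p (u, v) : ℝ) : ℂ) • ρB u v = _
      rw [smul_smul]
      push_cast
      ring_nf
    rw [h2]
    show ((ε : ℝ) : ℂ) • σb u + ((1 - ε : ℝ) : ℂ) • σb u = σb u
    rw [← add_smul, show ((ε : ℝ) : ℂ) + ((1 - ε : ℝ) : ℂ) = 1 by push_cast; ring, one_smul]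
  have hS2 : ∑ x, σ2 x = ∑ u, σb u := by
    rw [Fintype.sum_prod_type]
  -- entropies of full states
  have V0 : vnEntropy (blk σb) = ∑ u, Hu u := vnEntropy_blk _ hσbpsd
  have V2 : vnEntropy (blk σ2) = ∑ x : Fin dU × Fin dV, (p x * Huv x.1 x.2 + phiH (p x)) := by
    rw [vnEntropy_blk _ (fun x => psd_real_smul (hρpsd x.1 x.2) (hp x))]
    refine Finset.sum_congr rfl fun x _ => ?_
    show vnEntropy (((p x : ℝ) : ℂ) • ρB x.1 x.2) = _
    rw [vnEntropy_smul (hρpsd x.1 x.2), htr]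
    simp [hHuv]
  have V1 : vnEntropy (blk σ1)
      = ∑ u, ((∑ v, ((1 - ε) * p (u, v) * Huv u v + phiH ((1 - ε) * p (u, v))))
          + (ε * Hu u + phiH ε * pU u)) := by
    have hpsd1 : ∀ x, (σ1 x).PosSemidef := by
      rintro ⟨u, _ | v⟩
      · exact psd_real_smul (hσbpsd u) hε0
      · exact psd_real_smul (hρpsd u v) (mul_nonneg (by linarith) (hp (u, v)))
    rw [vnEntropy_blk _ hpsd1, Fintype.sum_prod_type]
    refine Finset.sum_congr rfl fun u _ => ?_
    rw [show (Finset.univ : Finset (Option (Fin dV))) = Finset.insertNone Finset.univ from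
      univ_option _, Finset.sum_insertNone]
    rw [add_comm]
    congr 1
    · refine Finset.sum_congr rfl fun v _ => ?_
      show vnEntropy ((((1 - ε) * p (u, v) : ℝ) : ℂ) • ρB u v) = _
      rw [vnEntropy_smul (hρpsd u v), htr]
      simp [hHuv]
    · show vnEntropy (((ε : ℝ) : ℂ) • σb u) = _
      rw [vnEntropy_smul (hσbpsd u), hσbtr]
      simp [hHu]
  -- entropies of classical marginals
  have W0 : vnEntropy (diagonal (fun u => (σb u).trace)) = ∑ u, phiH (pU u) := by
    rw [show (fun u => (σb u).trace) = fun u => ((pU u : ℝ) : ℂ) from funext hσbtr]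
    exact vnEntropy_diagonal _
  have W2 : vnEntropy (diagonal (fun x => (σ2 x).trace))
      = ∑ x : Fin dU × Fin dV, phiH (p x) := by
    rw [show (fun x => (σ2 x).trace) = fun x : Fin dU × Fin dV => ((p x : ℝ) : ℂ) from
      funext fun x => by simp [hσ2, Matrix.trace_smul, htr]]
    exact vnEntropy_diagonal _
  have W1 : vnEntropy (diagonal (fun x => (σ1 x).trace))
      = ∑ u, ((∑ v, phiH ((1 - ε) * p (u, v))) + phiH (ε * pU u)) := by
    rw [show (fun x => (σ1 x).trace)
        = fun x : Fin dU × Option (Fin dV) =>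
            ((Option.rec (ε * pU x.1) (fun v => (1 - ε) * p (x.1, v)) x.2 : ℝ) : ℂ) from
      funext fun x => by
        rcases x with ⟨u, _ | v⟩
        · show (((ε : ℝ) : ℂ) • σb u).trace = _
          rw [Matrix.trace_smul, hσbtr]
          push_cast
          simp
        · show ((((1 - ε) * p (u, v) : ℝ) : ℂ) • ρB u v).trace = _
          rw [Matrix.trace_smul, htr]
          simp]
    rw [vnEntropy_diagonal, Fintype.sum_prod_type]
    refine Finset.sum_congr rfl fun u _ => ?_
    rw [show (Finset.univ : Finset (Option (Fin dV))) = Finset.insertNone Finset.univ from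
      univ_option _, Finset.sum_insertNone, add_comm]
  -- assemble
  simp only [mutInfo, traceOutSnd_blk', traceOutFst_blk', hS1, hS2, V0, V1, V2, W0, W1, W2]
  set HB : ℝ := vnEntropy (∑ u, σb u) with hHB
  rw [Fintype.sum_prod_type, Fintype.sum_prod_type]
  have key : ∀ u : Fin dU,
      ((∑ v, phiH ((1 - ε) * p (u, v))) + phiH (ε * pU u))
        - ((∑ v, ((1 - ε) * p (u, v) * Huv u v + phiH ((1 - ε) * p (u, v))))
            + (ε * Hu u + phiH ε * pU u))
        + (Hu u - phiH (pU u))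
      = (1 - ε) * ((∑ v, phiH (p (u, v)))
          - (∑ v, (p (u, v) * Huv u v + phiH (p (u, v)))) + (Hu u - phiH (pU u))) := by
    intro u
    simp only [Finset.sum_add_distrib]
    rw [phiH_mul ε (pU u),
      show ∑ v, (1 - ε) * p (u, v) * Huv u v = (1 - ε) * ∑ v, p (u, v) * Huv u v from by
        rw [Finset.mul_sum]; exact Finset.sum_congr rfl fun v _ => by ring]
    ring
  calc ((∑ u, ((∑ v, phiH ((1 - ε) * p (u, v))) + phiH (ε * pU u))) + HB
          - ∑ u, ((∑ v, ((1 - ε) * p (u, v) * Huv u v + phiH ((1 - ε) * p (u, v))))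
              + (ε * Hu u + phiH ε * pU u)))
        - ((∑ u, phiH (pU u)) + HB - ∑ u, Hu u)
      = ∑ u, (((∑ v, phiH ((1 - ε) * p (u, v))) + phiH (ε * pU u))
          - ((∑ v, ((1 - ε) * p (u, v) * Huv u v + phiH ((1 - ε) * p (u, v))))
              + (ε * Hu u + phiH ε * pU u))
          + (Hu u - phiH (pU u))) := by
        simp only [Finset.sum_add_distrib, Finset.sum_sub_distrib]
        ring
    _ = ∑ u, (1 - ε) * ((∑ v, phiH (p (u, v)))
          - (∑ v, (p (u, v) * Huv u v + phiH (p (u, v)))) + (Hu u - phiH (pU u))) :=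
        Finset.sum_congr rfl fun u _ => key u
    _ = (1 - ε) * (((∑ u, ∑ v, phiH (p (u, v))) + HB
            - ∑ u, ∑ v, (p (u, v) * Huv u v + phiH (p (u, v))))
          - ((∑ u, phiH (pU u)) + HB - ∑ u, Hu u)) := by
        rw [← Finset.mul_sum]
        congr 1
        simp only [Finset.sum_add_distrib, Finset.sum_sub_distrib]
        ring

end
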